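/- Let τ > 0 and let θ : [0,∞) → ℝ be twice continuously differentiable with θ''(t) + τ·θ'(t) + θ(t)² − 1 = 0 for all t ≥ 0. Assume θ and θ' are bounded on [0,∞). Then ∫₀^∞ θ''(s)² ds < ∞ and θ''(t) → 0 as t → ∞. -/

import Mathlib

open Set Filter MeasureTheory

private lemma ftc_aux (F F' : ℝ → ℝ)
    (hF : ∀ t ∈ Ici (0:ℝ), HasDerivWithinAt F (F' t) (Ici 0) t)
    (hF' : ContinuousOn F' (Ici 0)) {x : ℝ} (hx : (0:ℝ) ≤ x) :
    ∫ t in (0:ℝ)..x, F' t = F x - F 0 := by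
  apply intervalIntegral.integral_eq_sub_of_hasDeriv_right_of_le hx
  · exact ContinuousOn.mono (fun t ht => (hF t ht).continuousWithinAt) (fun y hy => hy.1)
  · intro t ht
    exact (hF t ht.1.le).mono (Ioi_subset_Ici_self.trans (Ici_subset_Ici.mpr ht.1.le))
  · exact (hF'.mono (fun y hy => hy.1)).intervalIntegrable_of_Icc hx

private lemma intOn_aux (f : ℝ → ℝ) (hf : ContinuousOn f (Ici 0))
    (hnn : ∀ t : ℝ, 0 ≤ t → 0 ≤ f t) (C : ℝ)
    (hC : ∀ x : ℝ, 0 ≤ x → ∫ t in (0:ℝ)..x, f t ≤ C) :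
    IntegrableOn f (Ici (0:ℝ)) := by
  rw [integrableOn_Ici_iff_integrableOn_Ioi]
  apply integrableOn_Ioi_of_intervalIntegral_norm_bounded C 0 (b := fun x : ℝ => x)
    (l := atTop) ?_ tendsto_id
  · filter_upwards [eventually_ge_atTop (0:ℝ)] with x hx
    have : ∀ t ∈ uIcc (0:ℝ) x, ‖f t‖ = f t := by
      intro t ht
      rw [uIcc_of_le hx] at ht
      exact (Real.norm_eq_abs _).trans (abs_of_nonneg (hnn t ht.1))
    rw [intervalIntegral.integral_congr this]
    exact hC x hx
  · intro i
    rcases le_or_gt i 0 with hi | hi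
    · rw [Ioc_eq_empty (by exact not_lt.mpr hi)]
      exact integrableOn_empty
    · exact ((hf.mono (fun y hy => hy.1)).integrableOn_Icc (a := 0) (b := i)).mono_set
        Ioc_subset_Icc_self

set_option maxHeartbeats 1000000

/-- For `τ > 0`, any bounded twice continuously differentiable solution of
`θ'' + τθ' + θ² - 1 = 0` on `[0,∞)` with bounded first derivative satisfies
`∫₀^∞ θ''² < ∞` and `θ''(t) → 0` as `t → ∞`. -/
theorem stmt_9 (τ : ℝ) (hτ : 0 < τ) (θ θ' θ'' : ℝ → ℝ)
    (hd1 : ∀ t ∈ Ici (0 : ℝ), HasDerivWithinAt θ (θ' t) (Ici 0) t)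
    (hd2 : ∀ t ∈ Ici (0 : ℝ), HasDerivWithinAt θ' (θ'' t) (Ici 0) t)
    (hc : ContinuousOn θ'' (Ici 0))
    (heq : ∀ t : ℝ, 0 ≤ t → θ'' t + τ * θ' t + (θ t) ^ 2 - 1 = 0)
    (hbθ : ∃ K : ℝ, ∀ t : ℝ, 0 ≤ t → |θ t| ≤ K)
    (hbθ' : ∃ K : ℝ, ∀ t : ℝ, 0 ≤ t → |θ' t| ≤ K) :
    IntegrableOn (fun s : ℝ => (θ'' s) ^ 2) (Ici 0) ∧
    Tendsto θ'' atTop (nhds 0) := by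
  obtain ⟨K, hK⟩ := hbθ
  obtain ⟨K', hK'⟩ := hbθ'
  have hK0 : 0 ≤ K := le_trans (abs_nonneg _) (hK 0 le_rfl)
  have hK'0 : 0 ≤ K' := le_trans (abs_nonneg _) (hK' 0 le_rfl)
  have hcθ : ContinuousOn θ (Ici 0) := fun t ht => (hd1 t ht).continuousWithinAt
  have hcθ' : ContinuousOn θ' (Ici 0) := fun t ht => (hd2 t ht).continuousWithinAt
  have hθ'' : ∀ t : ℝ, 0 ≤ t → θ'' t = 1 - θ t ^ 2 - τ * θ' t := by
    intro t ht; have := heq t ht; linarith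
  -- Step A : bounded integral of θ'^2
  set E : ℝ → ℝ := fun t => θ' t ^ 2 / 2 + θ t ^ 3 / 3 - θ t with hEdef
  have hE : ∀ t ∈ Ici (0:ℝ), HasDerivWithinAt E (-τ * θ' t ^ 2) (Ici 0) t := by
    intro t ht
    have h := ((((hd2 t ht).pow 2).div_const 2).add (((hd1 t ht).pow 3).div_const 3)).sub
      (hd1 t ht)
    refine h.congr_deriv ?_
    rw [hθ'' t ht]; push_cast; ring
  set CE : ℝ := K' ^ 2 / 2 + K ^ 3 / 3 + K with hCEdef
  have hEB : ∀ t : ℝ, 0 ≤ t → |E t| ≤ CE := by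
    intro t ht
    have h1 : θ' t ^ 2 ≤ K' ^ 2 := by
      have := hK' t ht; nlinarith [abs_nonneg (θ' t), neg_abs_le (θ' t), le_abs_self (θ' t)]
    have h2 : |θ t ^ 3| ≤ K ^ 3 := by
      rw [abs_pow]; exact pow_le_pow_left₀ (abs_nonneg _) (hK t ht) 3
    have h2' := abs_le.mp h2
    have h3 := abs_le.mp (hK t ht)
    rw [abs_le]
    constructor <;> simp only [hEdef] <;> nlinarith [sq_nonneg (θ' t)]
  set C1 : ℝ := 2 * CE / τ with hC1def
  have hCE0 : 0 ≤ CE := le_trans (abs_nonneg _) (hEB 0 le_rfl)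
  have hIθ' : ∀ x : ℝ, 0 ≤ x → ∫ t in (0:ℝ)..x, θ' t ^ 2 ≤ C1 := by
    intro x hx
    have hcont : ContinuousOn (fun t => -τ * θ' t ^ 2) (Ici 0) :=
      (continuousOn_const.mul (hcθ'.pow 2))
    have := ftc_aux E _ hE hcont hx
    rw [intervalIntegral.integral_const_mul] at this
    have hEx := abs_le.mp (hEB x hx)
    have hE0 := abs_le.mp (hEB 0 le_rfl)
    rw [hC1def, le_div_iff₀ hτ]
    nlinarith
  have hIntθ' : IntegrableOn (fun t => θ' t ^ 2) (Ici (0:ℝ)) :=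
    intOn_aux _ (hcθ'.pow 2) (fun t _ => sq_nonneg _) C1 hIθ'
  -- Step B : derivative of θ''
  have hdd : ∀ t ∈ Ici (0:ℝ), HasDerivWithinAt θ''
      (-τ * θ'' t - 2 * θ t * θ' t) (Ici 0) t := by
    intro t ht
    have hg : HasDerivWithinAt (fun s => 1 - θ s ^ 2 - τ * θ' s)
        (-τ * θ'' t - 2 * θ t * θ' t) (Ici 0) t := by
      have h := ((hasDerivWithinAt_const t (Ici (0:ℝ)) (1:ℝ)).sub ((hd1 t ht).pow 2)).sub
        ((hd2 t ht).const_mul τ)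
      exact h.congr_deriv (by push_cast; ring)
    exact hg.congr (fun s hs => hθ'' s hs) (hθ'' t ht)
  set P : ℝ → ℝ := fun t => -τ * θ'' t ^ 2 - 2 * (θ t * θ' t * θ'' t) with hPdef
  have hcP : ContinuousOn P (Ici 0) :=
    (continuousOn_const.mul (hc.pow 2)).sub
      (continuousOn_const.mul ((hcθ.mul hcθ').mul hc))
  have hF : ∀ t ∈ Ici (0:ℝ), HasDerivWithinAt (fun s => θ'' s ^ 2 / 2) (P t) (Ici 0) t := by
    intro t ht
    have h := ((hdd t ht).pow 2).div_const 2
    exact h.congr_deriv (by push_cast; ring)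
  have hFTC : ∀ x : ℝ, 0 ≤ x →
      ∫ t in (0:ℝ)..x, P t = θ'' x ^ 2 / 2 - θ'' 0 ^ 2 / 2 :=
    fun x hx => ftc_aux _ _ hF hcP hx
  -- Step C : bounded integral of θ''^2
  set c : ℝ := 2 * K ^ 2 / τ with hcdef
  have hc0 : 0 ≤ c := by positivity
  have hptw : ∀ t : ℝ, 0 ≤ t → τ / 2 * θ'' t ^ 2 ≤ -P t + c * θ' t ^ 2 := by
    intro t ht
    have h1 : θ t ^ 2 * θ' t ^ 2 ≤ K ^ 2 * θ' t ^ 2 := by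
      have : θ t ^ 2 ≤ K ^ 2 := by
        nlinarith [abs_nonneg (θ t), neg_abs_le (θ t), le_abs_self (θ t), hK t ht]
      nlinarith [sq_nonneg (θ' t)]
    have hcτ : c * τ = 2 * K ^ 2 := by rw [hcdef]; field_simp
    simp only [hPdef]
    nlinarith [sq_nonneg (τ * θ'' t + 2 * (θ t * θ' t)), mul_pos hτ hτ, sq_nonneg (θ'' t),
      mul_le_mul_of_nonneg_left h1 (le_of_lt hτ)]
  set C2 : ℝ := (θ'' 0 ^ 2 / 2 + c * C1) * (2 / τ) with hC2def
  have hIθ'' : ∀ x : ℝ, 0 ≤ x → ∫ t in (0:ℝ)..x, θ'' t ^ 2 ≤ C2 := by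
    intro x hx
    have hsub : Icc (0:ℝ) x ⊆ Ici 0 := fun y hy => hy.1
    have hmono : ∫ t in (0:ℝ)..x, τ / 2 * θ'' t ^ 2 ≤
        ∫ t in (0:ℝ)..x, (-P t + c * θ' t ^ 2) := by
      apply intervalIntegral.integral_mono_on hx
      · exact ((continuousOn_const.mul (hc.pow 2)).mono hsub).intervalIntegrable_of_Icc hx
      · exact (((hcP.neg.add (continuousOn_const.mul (hcθ'.pow 2)))).mono hsub
          ).intervalIntegrable_of_Icc hx
      · intro t ht; exact hptw t ht.1
    rw [intervalIntegral.integral_const_mul] at hmono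
    have hadd : ∫ t in (0:ℝ)..x, (-P t + c * θ' t ^ 2) =
        (∫ t in (0:ℝ)..x, -P t) + ∫ t in (0:ℝ)..x, c * θ' t ^ 2 := by
      apply intervalIntegral.integral_add
      · exact ((hcP.neg).mono hsub).intervalIntegrable_of_Icc hx
      · exact ((continuousOn_const.mul (hcθ'.pow 2)).mono hsub).intervalIntegrable_of_Icc hx
    rw [hadd, intervalIntegral.integral_neg, hFTC x hx,
      intervalIntegral.integral_const_mul] at hmono
    have h1 := hIθ' x hx
    have h2 : (0:ℝ) ≤ θ'' x ^ 2 / 2 := by positivity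
    have h3 := mul_le_mul_of_nonneg_left h1 hc0
    have key : τ / 2 * (∫ t in (0:ℝ)..x, θ'' t ^ 2) ≤ θ'' 0 ^ 2 / 2 + c * C1 := by linarith
    have h4 := mul_le_mul_of_nonneg_right key (by positivity : (0:ℝ) ≤ 2 / τ)
    have h5 : τ / 2 * (∫ t in (0:ℝ)..x, θ'' t ^ 2) * (2 / τ) =
        ∫ t in (0:ℝ)..x, θ'' t ^ 2 := by field_simp
    linarith
  have hInt2 : IntegrableOn (fun s : ℝ => θ'' s ^ 2) (Ici (0:ℝ)) :=
    intOn_aux _ (hc.pow 2) (fun t _ => sq_nonneg _) C2 hIθ''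
  refine ⟨hInt2, ?_⟩
  -- Step D : θ'' → 0
  have hQ : IntegrableOn (fun t => θ t * θ' t * θ'' t) (Ici (0:ℝ)) := by
    apply Integrable.mono' (g := fun t => K / 2 * (θ' t ^ 2 + θ'' t ^ 2))
    · exact (hIntθ'.add hInt2).const_mul (K / 2)
    · exact ((hcθ.mul hcθ').mul hc).aestronglyMeasurable measurableSet_Ici
    · refine (ae_restrict_iff' measurableSet_Ici).mpr (ae_of_all _ ?_)
      intro t ht
      have h1 := hK t ht
      have hab : |θ' t| * |θ'' t| ≤ (θ' t ^ 2 + θ'' t ^ 2) / 2 := by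
        nlinarith [sq_nonneg (|θ' t| - |θ'' t|), sq_abs (θ' t), sq_abs (θ'' t)]
      rw [Real.norm_eq_abs, abs_mul, abs_mul]
      nlinarith [abs_nonneg (θ' t), abs_nonneg (θ'' t), abs_nonneg (θ t),
        mul_nonneg (abs_nonneg (θ' t)) (abs_nonneg (θ'' t))]
  have hPInt : IntegrableOn P (Ici (0:ℝ)) := by
    have := (hInt2.const_mul (-τ)).sub (hQ.const_mul 2)
    exact this
  have hPIoi : IntegrableOn P (Ioi (0:ℝ)) := hPInt.mono_set Ioi_subset_Ici_self
  have htendI : Tendsto (fun x => ∫ t in (0:ℝ)..x, P t) atTop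
      (nhds (∫ t in Ioi (0:ℝ), P t)) :=
    intervalIntegral_tendsto_integral_Ioi 0 hPIoi tendsto_id
  set L : ℝ := θ'' 0 ^ 2 + 2 * ∫ t in Ioi (0:ℝ), P t with hLdef
  have htend : Tendsto (fun x => θ'' x ^ 2) atTop (nhds L) := by
    have h := (htendI.const_mul 2).const_add (θ'' 0 ^ 2)
    refine Tendsto.congr' ?_ h
    filter_upwards [eventually_ge_atTop (0:ℝ)] with x hx
    have h2 := hFTC x hx
    show θ'' 0 ^ 2 + 2 * (∫ t in (0:ℝ)..x, P t) = θ'' x ^ 2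
    linarith
  have hL0 : 0 ≤ L := ge_of_tendsto' htend (fun x => sq_nonneg _)
  have hLeq : L = 0 := by
    by_contra hne
    have hLpos : 0 < L := lt_of_le_of_ne hL0 (Ne.symm hne)
    have hhalf : L / 2 < L := by linarith
    have hev : ∀ᶠ x in atTop, L / 2 < θ'' x ^ 2 :=
      htend.eventually (eventually_gt_nhds hhalf)
    obtain ⟨M, hM⟩ := eventually_atTop.mp hev
    set M' : ℝ := max M 0 with hM'def
    have hsubM : Ici M' ⊆ Ici (0:ℝ) := Ici_subset_Ici.mpr (le_max_right _ _)
    have hIci : IntegrableOn (fun s : ℝ => θ'' s ^ 2) (Ici M') := hInt2.mono_set hsubM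
    have hconst : Integrable (fun _ : ℝ => L / 2) (volume.restrict (Ici M')) := by
      apply Integrable.mono' hIci aestronglyMeasurable_const
      refine (ae_restrict_iff' measurableSet_Ici).mpr (ae_of_all _ ?_)
      intro t ht
      rw [Real.norm_eq_abs, abs_of_pos (by linarith)]
      exact (hM t (le_trans (le_max_left _ _) ht)).le
    rw [integrable_const_iff] at hconst
    rcases hconst with h | h
    · have hne2 : L / 2 ≠ 0 := by positivity
      exact hne2 h
    · rw [isFiniteMeasure_restrict, Real.volume_Ici] at h
      simp at h
  rw [hLeq] at htend
  have habs : Tendsto (fun x => |θ'' x|) atTop (nhds 0) := by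
    have h : Tendsto (fun x => Real.sqrt (θ'' x ^ 2)) atTop (nhds (Real.sqrt 0)) :=
      (Real.continuous_sqrt.tendsto 0).comp htend
    rw [Real.sqrt_zero] at h
    exact h.congr (fun x => Real.sqrt_sq_eq_abs _)
  have hneg : Tendsto (fun x => -|θ'' x|) atTop (nhds 0) := by simpa using habs.neg
  exact tendsto_of_tendsto_of_tendsto_of_le_of_le hneg habs
    (fun x => neg_abs_le _) (fun x => le_abs_self _)
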